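/- Let G be a topological group acting continuously on a topological space X and H ≤ G a subgroup. The continuous map G × X_H → X_{(H)}, (g, x) ↦ g • x, induces a well-defined continuous bijection from the quotient G ×_{N(H)} X_H (orbit space of the twisted action h•(g,x) = (gh, h⁻¹•x) of the normalizer N(H)) onto the (H)-orbit type set X_{(H)} = {x ∈ X | G_x is conjugate to H}. -/

import Mathlib

private lemma conj_map_eq_imp_mem_normalizer {G : Type*} [Group G] {H : Subgroup G} {a : G}
    (h : Subgroup.map (MulAut.conj a).toMonoidHom H = H) : a ∈ Subgroup.normalizer (H : Set G) := by
  rw [Subgroup.mem_normalizer_iff]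
  intro k
  constructor
  · intro hk
    have : a * k * a⁻¹ ∈ Subgroup.map (MulAut.conj a).toMonoidHom H :=
      ⟨k, hk, by simp [MulAut.conj_apply]⟩
    rwa [h] at this
  · intro hk
    rw [← h] at hk
    obtain ⟨m, hm, hmk⟩ := hk
    simp only [MulEquiv.coe_toMonoidHom, MulAut.conj_apply] at hmk
    have : m = k := by
      have := mul_left_cancel (mul_right_cancel hmk)
      exact this
    rwa [← this]

/-- The map `(g, x) ↦ g • x` induces a continuous bijection from the twisted quotient
`G ×_{N(H)} X_H` onto the orbit type set `X_{(H)}`. -/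
theorem twisted_quotient_bijects_onto_orbit_type
    (G X : Type*) [Group G] [TopologicalSpace G] [IsTopologicalGroup G]
    [TopologicalSpace X] [MulAction G X] [ContinuousSMul G X] (H : Subgroup G) :
    ∃ F : Quot (fun (p p' : G × {x : X // MulAction.stabilizer G x = H}) =>
        ∃ h ∈ Subgroup.normalizer (H : Set G), p'.1 = p.1 * h ∧ (p'.2 : X) = h⁻¹ • (p.2 : X)) → X,
      (∀ (g : G) (x : {x : X // MulAction.stabilizer G x = H}),
        F (Quot.mk _ (g, x)) = g • (x : X)) ∧
      Continuous F ∧ Function.Injective F ∧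
      Set.range F =
        {x : X | ∃ g : G,
          MulAction.stabilizer G x = Subgroup.map (MulAut.conj g).toMonoidHom H} := by
  set r := fun (p p' : G × {x : X // MulAction.stabilizer G x = H}) =>
      ∃ h ∈ Subgroup.normalizer (H : Set G), p'.1 = p.1 * h ∧ (p'.2 : X) = h⁻¹ • (p.2 : X) with hr
  have hwd : ∀ p p', r p p' → p.1 • (p.2 : X) = p'.1 • (p'.2 : X) := by
    rintro ⟨g, x⟩ ⟨g', x'⟩ ⟨h, -, h1, h2⟩
    simp only at h1 h2
    rw [h1, h2, mul_smul, smul_inv_smul]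
  refine ⟨Quot.lift (fun p => p.1 • (p.2 : X)) hwd, fun g x => rfl, ?_, ?_, ?_⟩
  · exact continuous_quot_lift hwd (by fun_prop)
  · intro a b
    induction a using Quot.ind with | _ p =>
    induction b using Quot.ind with | _ q =>
    obtain ⟨g, x⟩ := p
    obtain ⟨g', x'⟩ := q
    intro hfe
    have hfe' : g • (x : X) = g' • (x' : X) := hfe
    have hx' : (x' : X) = (g'⁻¹ * g) • (x : X) := by
      rw [mul_smul]; exact (eq_inv_smul_iff.mpr hfe'.symm)
    apply Quot.sound
    refine ⟨g⁻¹ * g', ?_, by group, ?_⟩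
    · have hH : Subgroup.map (MulAut.conj (g'⁻¹ * g)).toMonoidHom H = H := by
        conv_lhs => rw [← x.2]
        rw [← MulAction.stabilizer_smul_eq_stabilizer_map_conj, ← hx', x'.2]
      have h1 : (g'⁻¹ * g) ∈ Subgroup.normalizer (H : Set G) := conj_map_eq_imp_mem_normalizer hH
      have : (g'⁻¹ * g)⁻¹ ∈ Subgroup.normalizer (H : Set G) := (Subgroup.normalizer (H : Set G)).inv_mem h1
      simpa [mul_inv_rev] using this
    · show (x' : X) = (g⁻¹ * g')⁻¹ • (x : X)
      rw [hx']; congr 1; group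
  · ext y
    simp only [Set.mem_range, Set.mem_setOf_eq]
    constructor
    · rintro ⟨q, rfl⟩
      induction q using Quot.ind with | _ p =>
      obtain ⟨g, x⟩ := p
      refine ⟨g, ?_⟩
      show MulAction.stabilizer G (g • (x : X)) = _
      rw [MulAction.stabilizer_smul_eq_stabilizer_map_conj, x.2]
    · rintro ⟨g, hg⟩
      have hst : MulAction.stabilizer G (g⁻¹ • y) = H := by
        rw [MulAction.stabilizer_smul_eq_stabilizer_map_conj, hg]
        ext k
        simp only [Subgroup.mem_map, MulEquiv.coe_toMonoidHom, MulAut.conj_apply]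
        constructor
        · rintro ⟨m, ⟨n, hn, rfl⟩, rfl⟩
          have : g⁻¹ * (g * n * g⁻¹) * g⁻¹⁻¹ = n := by group
          rwa [this]
        · intro hk
          exact ⟨g * k * g⁻¹, ⟨k, hk, rfl⟩, by group⟩
      exact ⟨Quot.mk r (g, ⟨g⁻¹ • y, hst⟩), by
        show g • (g⁻¹ • y) = y
        rw [smul_inv_smul]⟩
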